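/- arXiv:2511.21198 — 3 statements merged into one kernel-verified Lean document; each statement's English description precedes it below -/
import Mathlib

section
/- For all δ ∈ (0,1), with s_k and q_k as above, one has q_0 + q_2 < 0, i.e. -(1/2)^δ + s_1 - s_2 < 0 where s_1 = (3/2)^δ - 2(1/2)^δ and s_2 = (5/2)^δ - 2(3/2)^δ + (1/2)^δ. -/
open Real Set

private lemma log_fact : 5 * Real.log 5 < 9 * Real.log 3 := by
  have h1 : Real.log ((5:ℝ)^(5:ℕ)) < Real.log ((3:ℝ)^(9:ℕ)) :=
    Real.log_lt_log (by norm_num) (by norm_num)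
  rw [Real.log_pow, Real.log_pow] at h1; push_cast at h1; linarith

private lemma deriv_pos (x : ℝ) (hx : x < 1) :
    0 < 3 * Real.log 3 * Real.exp (x * Real.log 3) - Real.log 5 * Real.exp (x * Real.log 5) := by
  have hl3 : 0 < Real.log 3 := Real.log_pos (by norm_num)
  have hl5 : 0 < Real.log 5 := Real.log_pos (by norm_num)
  have hlt : Real.log 3 < Real.log 5 := Real.log_lt_log (by norm_num) (by norm_num)
  have h1 : Real.exp (x * Real.log 5) = Real.exp (x * Real.log 3) * Real.exp (x * (Real.log 5 - Real.log 3)) := by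
    rw [← Real.exp_add]; ring_nf
  have h2 : Real.exp (x * (Real.log 5 - Real.log 3)) < Real.exp (Real.log 5 - Real.log 3) := by
    apply Real.exp_lt_exp.mpr
    nlinarith
  have h3 : Real.exp (Real.log 5 - Real.log 3) = 5 / 3 := by
    rw [Real.exp_sub, Real.exp_log (by norm_num : (0:ℝ) < 5), Real.exp_log (by norm_num : (0:ℝ) < 3)]
  have hE : 0 < Real.exp (x * Real.log 3) := Real.exp_pos _
  have h2' : Real.exp (x * (Real.log 5 - Real.log 3)) < 5 / 3 := h3 ▸ h2
  rw [h1]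
  nlinarith [mul_lt_mul_of_pos_left h2' (mul_pos hl5 hE),
    mul_pos hE (sub_pos.mpr log_fact)]

private lemma key (δ : ℝ) (h0 : 0 < δ) (h1 : δ < 1) :
    3 * Real.exp (δ * Real.log 3) - Real.exp (δ * Real.log 5) < 4 := by
  set f : ℝ → ℝ := fun x => 3 * Real.exp (x * Real.log 3) - Real.exp (x * Real.log 5) with hf
  have hderiv : ∀ x : ℝ, HasDerivAt f
      (3 * Real.log 3 * Real.exp (x * Real.log 3) - Real.log 5 * Real.exp (x * Real.log 5)) x := by
    intro x
    have d3 : HasDerivAt (fun x : ℝ => Real.exp (x * Real.log 3)) (Real.exp (x * Real.log 3) * Real.log 3) x := by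
      simpa using ((hasDerivAt_id x).mul_const (Real.log 3)).exp
    have d5 : HasDerivAt (fun x : ℝ => Real.exp (x * Real.log 5)) (Real.exp (x * Real.log 5) * Real.log 5) x := by
      simpa using ((hasDerivAt_id x).mul_const (Real.log 5)).exp
    have := (d3.const_mul 3).sub d5
    refine this.congr_deriv ?_
    ring
  have hmono : StrictMonoOn f (Icc 0 1) := by
    apply strictMonoOn_of_deriv_pos (convex_Icc 0 1)
    · exact Continuous.continuousOn (by continuity)
    · intro x hx
      rw [interior_Icc] at hx
      rw [(hderiv x).deriv]
      exact deriv_pos x hx.2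
  have hlt : f δ < f 1 := hmono ⟨le_of_lt h0, le_of_lt h1⟩ ⟨zero_le_one, le_refl 1⟩ h1
  have hf1 : f 1 = 4 := by
    simp only [hf, one_mul, Real.exp_log (by norm_num : (0:ℝ) < 3),
      Real.exp_log (by norm_num : (0:ℝ) < 5)]
    norm_num
  rw [hf1] at hlt
  exact hlt

theorem stmt_3 (δ : ℝ) (h0 : 0 < δ) (h1 : δ < 1) :
    -(1/2 : ℝ) ^ δ + ((3/2 : ℝ) ^ δ - 2 * (1/2 : ℝ) ^ δ)
      - ((5/2 : ℝ) ^ δ - 2 * (3/2 : ℝ) ^ δ + (1/2 : ℝ) ^ δ) < 0 := by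
  have hc : (0:ℝ) < (1/2 : ℝ) ^ δ := Real.rpow_pos_of_pos (by norm_num) δ
  have h3 : (3/2 : ℝ) ^ δ = Real.exp (δ * Real.log 3) * (1/2 : ℝ) ^ δ := by
    rw [show (3/2 : ℝ) = 3 * (1/2) by norm_num,
      Real.mul_rpow (by norm_num) (by norm_num),
      Real.rpow_def_of_pos (by norm_num : (0:ℝ) < 3), mul_comm (Real.log 3) δ]
  have h5 : (5/2 : ℝ) ^ δ = Real.exp (δ * Real.log 5) * (1/2 : ℝ) ^ δ := by
    rw [show (5/2 : ℝ) = 5 * (1/2) by norm_num,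
      Real.mul_rpow (by norm_num) (by norm_num),
      Real.rpow_def_of_pos (by norm_num : (0:ℝ) < 5), mul_comm (Real.log 5) δ]
  have hk := key δ h0 h1
  rw [h3, h5]
  nlinarith
end

section
/- For all δ ∈ (0,1), the function h(δ) := -(7/2)^δ + 4(5/2)^δ - 6(3/2)^δ + 5(1/2)^δ satisfies h(δ) > 0. -/
open Real

private lemma log_lt_aux {a : ℝ} (ha : 0 < a) (p q : ℕ) (hq : 0 < q)
    (h : a ^ q < (2.7182818283:ℝ) ^ p) : Real.log a < (p : ℝ) / q := by
  have e1 : (2.7182818283:ℝ) < Real.exp 1 := Real.exp_one_gt_d9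
  have h2 : a ^ q < Real.exp 1 ^ p :=
    lt_of_lt_of_le h (pow_le_pow_left₀ (by norm_num) e1.le p)
  have h3 : Real.exp 1 ^ p = Real.exp p := by
    rw [← Real.exp_nat_mul]; ring_nf
  have h4 : Real.log (a ^ q) < Real.log (Real.exp p) :=
    Real.log_lt_log (pow_pos ha q) (by rw [← h3]; exact h2)
  rw [Real.log_pow, Real.log_exp] at h4
  rw [lt_div_iff₀ (by exact_mod_cast hq : (0:ℝ) < q)]
  push_cast at h4 ⊢
  linarith

private lemma lt_log_aux {a : ℝ} (ha : 0 < a) (p q : ℕ) (hq : 0 < q)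
    (h : (2.7182818286:ℝ) ^ p < a ^ q) : (p : ℝ) / q < Real.log a := by
  have e1 : Real.exp 1 < (2.7182818286:ℝ) := Real.exp_one_lt_d9
  have h2 : Real.exp 1 ^ p < a ^ q :=
    lt_of_le_of_lt (pow_le_pow_left₀ (Real.exp_pos 1).le e1.le p) h
  have h3 : Real.exp 1 ^ p = Real.exp p := by
    rw [← Real.exp_nat_mul]; ring_nf
  have h4 : Real.log (Real.exp p) < Real.log (a ^ q) :=
    Real.log_lt_log (by positivity) (by rw [← h3]; exact h2)
  rw [Real.log_pow, Real.log_exp] at h4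
  rw [div_lt_iff₀ (by exact_mod_cast hq : (0:ℝ) < q)]
  push_cast at h4 ⊢
  linarith

private lemma log3_lo : (1.09:ℝ) < Real.log 3 := by
  have := lt_log_aux (by norm_num : (0:ℝ) < 3) 109 100 (by norm_num) (by norm_num)
  norm_num at this ⊢; linarith

private lemma log3_hi : Real.log 3 < 1.10 := by
  have := log_lt_aux (by norm_num : (0:ℝ) < 3) 11 10 (by norm_num) (by norm_num)
  norm_num at this ⊢; linarith

private lemma log5_lo : (1.60:ℝ) < Real.log 5 := by
  have := lt_log_aux (by norm_num : (0:ℝ) < 5) 8 5 (by norm_num) (by norm_num)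
  norm_num at this ⊢; linarith

private lemma log5_hi : Real.log 5 < 1.61 := by
  have := log_lt_aux (by norm_num : (0:ℝ) < 5) 161 100 (by norm_num) (by norm_num)
  norm_num at this ⊢; linarith

private lemma log7_lo : (1.94:ℝ) < Real.log 7 := by
  have := lt_log_aux (by norm_num : (0:ℝ) < 7) 97 50 (by norm_num) (by norm_num)
  norm_num at this ⊢; linarith

private lemma log7_hi : Real.log 7 < 1.95 := by
  have := log_lt_aux (by norm_num : (0:ℝ) < 7) 39 20 (by norm_num) (by norm_num)
  norm_num at this ⊢; linarith

/-- Lower bound on `(a/5)^t` using `exp x ≥ 1 + x`, tangent at `t = 1`. -/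
private lemma rpow_ratio_lo {a : ℝ} (ha : 0 < a) (t : ℝ) :
    (a/5) * (1 + (t - 1) * (Real.log a - Real.log 5)) ≤ (a/5 : ℝ) ^ t := by
  have h5 : (0:ℝ) < a/5 := by positivity
  have hrw : (a/5 : ℝ) ^ t = (a/5) * Real.exp ((t-1) * Real.log (a/5)) := by
    rw [Real.rpow_def_of_pos h5,
      show Real.log (a/5) * t = Real.log (a/5) + (t-1) * Real.log (a/5) by ring,
      Real.exp_add, Real.exp_log h5]
  rw [hrw, Real.log_div (ne_of_gt ha) (by norm_num)]
  have := Real.add_one_le_exp ((t-1) * (Real.log a - Real.log 5))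
  nlinarith

private lemma gderiv_neg (t : ℝ) (ht0 : 0 < t) (ht1 : t < 1) :
    -((7:ℝ) ^ t * Real.log 7) + 4 * ((5:ℝ) ^ t * Real.log 5)
      - 6 * ((3:ℝ) ^ t * Real.log 3) < 0 := by
  have L3lo := log3_lo; have L3hi := log3_hi
  have L5lo := log5_lo; have L5hi := log5_hi
  have L7lo := log7_lo; have L7hi := log7_hi
  set L3 := Real.log 3
  set L5 := Real.log 5
  set L7 := Real.log 7
  have p5 : (0:ℝ) < (5:ℝ) ^ t := Real.rpow_pos_of_pos (by norm_num) t
  have b3 := rpow_ratio_lo (by norm_num : (0:ℝ) < 3) t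
  have b7 := rpow_ratio_lo (by norm_num : (0:ℝ) < 7) t
  rw [Real.div_rpow (by norm_num) (by norm_num)] at b3 b7
  have b3' : 3/5 * (1 + (t - 1) * (L3 - L5)) * (5:ℝ)^t ≤ (3:ℝ)^t :=
    (le_div_iff₀ p5).mp b3
  have b7' : 7/5 * (1 + (t - 1) * (L7 - L5)) * (5:ℝ)^t ≤ (7:ℝ)^t :=
    (le_div_iff₀ p5).mp b7
  -- the bracket term is nonnegative
  have hB : 0 ≤ (18/5)*L3*(L5-L3) - (7/5)*L7*(L7-L5) := by nlinarith
  have hBt : 0 ≤ (1-t) * ((18/5)*L3*(L5-L3) - (7/5)*L7*(L7-L5)) :=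
    mul_nonneg (by linarith) hB
  have hbr : 4*L5 < 6*L3*(3/5*(1 + (t - 1) * (L3 - L5)))
      + L7*(7/5*(1 + (t - 1) * (L7 - L5))) := by nlinarith
  have key := mul_lt_mul_of_pos_right hbr p5
  have e3 : 6*L3*(3/5 * (1 + (t - 1) * (L3 - L5)) * (5:ℝ)^t) ≤ 6*L3*(3:ℝ)^t :=
    mul_le_mul_of_nonneg_left b3' (by linarith)
  have e7 : L7*(7/5 * (1 + (t - 1) * (L7 - L5)) * (5:ℝ)^t) ≤ L7*(7:ℝ)^t :=
    mul_le_mul_of_nonneg_left b7' (by linarith)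
  nlinarith [key, e3, e7]

theorem stmt_6 (δ : ℝ) (h0 : 0 < δ) (h1 : δ < 1) :
    0 < -(7/2 : ℝ) ^ δ + 4 * (5/2 : ℝ) ^ δ - 6 * (3/2 : ℝ) ^ δ + 5 * (1/2 : ℝ) ^ δ := by
  set g : ℝ → ℝ := fun t => -(7:ℝ)^t + 4*(5:ℝ)^t - 6*(3:ℝ)^t + 5 with hgdef
  have hg : ∀ t : ℝ, HasDerivAt g
      (-((7:ℝ)^t * Real.log 7) + 4*((5:ℝ)^t * Real.log 5) - 6*((3:ℝ)^t * Real.log 3)) t := by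
    intro t
    have d7 := (Real.hasStrictDerivAt_const_rpow (by norm_num : (0:ℝ) < 7) t).hasDerivAt
    have d5 := (Real.hasStrictDerivAt_const_rpow (by norm_num : (0:ℝ) < 5) t).hasDerivAt
    have d3 := (Real.hasStrictDerivAt_const_rpow (by norm_num : (0:ℝ) < 3) t).hasDerivAt
    have := ((d7.neg.add (d5.const_mul 4)).sub (d3.const_mul 6)).add_const 5
    refine this.congr_of_eventuallyEq (Filter.Eventually.of_forall fun x => ?_)
    simp only [hgdef, Pi.add_apply, Pi.sub_apply, Pi.neg_apply]
  have anti : StrictAntiOn g (Set.Icc (0:ℝ) 1) := by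
    apply strictAntiOn_of_deriv_neg (convex_Icc 0 1)
    · exact fun x _ => (hg x).differentiableAt.continuousAt.continuousWithinAt
    · intro x hx
      rw [interior_Icc] at hx
      rw [(hg x).deriv]
      exact gderiv_neg x hx.1 hx.2
  have hgδ : 0 < g δ := by
    have h10 : g 1 < g δ := anti ⟨h0.le, h1.le⟩ ⟨zero_le_one, le_refl 1⟩ h1
    have hg1 : g 1 = 0 := by simp [hgdef, Real.rpow_one]; ring
    linarith
  have phalf : (0:ℝ) < (1/2 : ℝ) ^ δ := Real.rpow_pos_of_pos (by norm_num) δ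
  have e7 : (7/2:ℝ)^δ = (7:ℝ)^δ * (1/2:ℝ)^δ := by
    rw [show (7/2:ℝ) = 7*(1/2) by norm_num, Real.mul_rpow (by norm_num) (by norm_num)]
  have e5 : (5/2:ℝ)^δ = (5:ℝ)^δ * (1/2:ℝ)^δ := by
    rw [show (5/2:ℝ) = 5*(1/2) by norm_num, Real.mul_rpow (by norm_num) (by norm_num)]
  have e3 : (3/2:ℝ)^δ = (3:ℝ)^δ * (1/2:ℝ)^δ := by
    rw [show (3/2:ℝ) = 3*(1/2) by norm_num, Real.mul_rpow (by norm_num) (by norm_num)]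
  have := mul_pos phalf hgδ
  simp only [hgdef] at this
  nlinarith [this]
end

section
/- For all δ ∈ (0,1) and integers k ≥ 3, q_{k+1} > q_k, where q_k = s_{k-1} - s_k and s_j = (j+1/2)^δ - 2(j-1/2)^δ + (j-3/2)^δ for j ≥ 2. That is, the sequence (q_k)_{k≥3} is strictly increasing. -/
noncomputable def g (δ : ℝ) (x : ℝ) : ℝ :=
  (x + 1/2) ^ δ - 2 * (x - 1/2) ^ δ + (x - 3/2) ^ δ

noncomputable def q (δ : ℝ) (k : ℕ) : ℝ := g δ ((k : ℝ) - 1) - g δ (k : ℝ)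

/-- If `f` has derivative `f'` on `[a-1, a+1]` and `f'` is strictly monotone there,
then the second difference of `f` at `a` is positive. -/
lemma seconddiff_pos {f f' : ℝ → ℝ} {a : ℝ}
    (hd : ∀ x ∈ Set.Icc (a - 1) (a + 1), HasDerivAt f (f' x) x)
    (hm : StrictMonoOn f' (Set.Icc (a - 1) (a + 1))) :
    2 * f a < f (a - 1) + f (a + 1) := by
  have hcont : ContinuousOn f (Set.Icc (a - 1) (a + 1)) :=
    fun x hx => (hd x hx).continuousAt.continuousWithinAt
  have h1 : (a - 1 : ℝ) < a := by linarith
  have h2 : a < a + 1 := by linarith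
  obtain ⟨c, hc, hceq⟩ := exists_hasDerivAt_eq_slope f f' h1
    (hcont.mono (Set.Icc_subset_Icc le_rfl (by linarith)))
    (fun x hx => hd x ⟨hx.1.le, by linarith [hx.2]⟩)
  obtain ⟨d, hhd, hdeq⟩ := exists_hasDerivAt_eq_slope f f' h2
    (hcont.mono (Set.Icc_subset_Icc (by linarith) le_rfl))
    (fun x hx => hd x ⟨by linarith [hx.1], hx.2.le⟩)
  have hcd : c < d := lt_trans hc.2 hhd.1
  have hlt : f' c < f' d :=
    hm ⟨hc.1.le, by linarith [hc.2]⟩ ⟨by linarith [hhd.1], hhd.2.le⟩ hcd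
  rw [hceq, hdeq] at hlt
  have e1 : a - (a - 1) = (1 : ℝ) := by ring
  have e2 : a + 1 - a = (1 : ℝ) := by ring
  rw [e1, e2, div_one, div_one] at hlt
  linarith

/-- Second difference of `t ↦ t ^ p` for negative `p` is positive on positives. -/
lemma rpow_seconddiff_pos {p a : ℝ} (hp : p < 0) (ha : 1 < a) :
    2 * a ^ p < (a - 1) ^ p + (a + 1) ^ p := by
  have ha0 : (0 : ℝ) < a - 1 := by linarith
  apply seconddiff_pos (f := fun t : ℝ => t ^ p) (f' := fun t => p * t ^ (p - 1))
  · intro x hx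
    have hx0 : x ≠ 0 := by have := hx.1; intro h; rw [h] at this; linarith
    exact Real.hasDerivAt_rpow_const (Or.inl hx0)
  · intro x hx y hy hxy
    have hx0 : (0 : ℝ) < x := lt_of_lt_of_le ha0 hx.1
    have : y ^ (p - 1) < x ^ (p - 1) :=
      Real.rpow_lt_rpow_of_neg hx0 hxy (by linarith)
    simpa using mul_lt_mul_of_neg_left this hp

noncomputable def ψ (δ : ℝ) (x : ℝ) : ℝ := x ^ δ - 2 * (x + 1) ^ δ + (x + 2) ^ δ

lemma psi_hasDerivAt {δ x : ℝ} (hx : 0 < x) :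
    HasDerivAt (ψ δ) (δ * x ^ (δ - 1) - 2 * (δ * (x + 1) ^ (δ - 1))
      + δ * (x + 2) ^ (δ - 1)) x := by
  have h1 : HasDerivAt (fun t : ℝ => t ^ δ) (δ * x ^ (δ - 1)) x :=
    Real.hasDerivAt_rpow_const (Or.inl hx.ne')
  have h2 : HasDerivAt (fun t : ℝ => (t + 1) ^ δ) (δ * (x + 1) ^ (δ - 1)) x := by
    have := ((hasDerivAt_id x).add_const 1).rpow_const
      (p := δ) (Or.inl (by positivity))
    simpa using this
  have h3 : HasDerivAt (fun t : ℝ => (t + 2) ^ δ) (δ * (x + 2) ^ (δ - 1)) x := by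
    have := ((hasDerivAt_id x).add_const 2).rpow_const
      (p := δ) (Or.inl (by positivity))
    simpa using this
  exact (h1.sub (h2.const_mul 2)).add h3

noncomputable def ψ' (δ : ℝ) (x : ℝ) : ℝ :=
  δ * x ^ (δ - 1) - 2 * (δ * (x + 1) ^ (δ - 1)) + δ * (x + 2) ^ (δ - 1)

lemma psi'_hasDerivAt {δ x : ℝ} (hx : 0 < x) :
    HasDerivAt (ψ' δ) (δ * ((δ - 1) * x ^ (δ - 2)) - 2 * (δ * ((δ - 1) * (x + 1) ^ (δ - 2)))
      + δ * ((δ - 1) * (x + 2) ^ (δ - 2))) x := by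
  have e : (δ - 1 - 1 : ℝ) = δ - 2 := by ring
  have h1 : HasDerivAt (fun t : ℝ => t ^ (δ - 1)) ((δ - 1) * x ^ (δ - 2)) x := by
    have := Real.hasDerivAt_rpow_const (p := δ - 1) (x := x) (Or.inl hx.ne')
    rwa [e] at this
  have h2 : HasDerivAt (fun t : ℝ => (t + 1) ^ (δ - 1)) ((δ - 1) * (x + 1) ^ (δ - 2)) x := by
    have := ((hasDerivAt_id x).add_const 1).rpow_const
      (p := δ - 1) (Or.inl (by positivity))
    rw [e] at this; simpa using this
  have h3 : HasDerivAt (fun t : ℝ => (t + 2) ^ (δ - 1)) ((δ - 1) * (x + 2) ^ (δ - 2)) x := by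
    have := ((hasDerivAt_id x).add_const 2).rpow_const
      (p := δ - 1) (Or.inl (by positivity))
    rw [e] at this; simpa using this
  exact ((h1.const_mul δ).sub ((h2.const_mul δ).const_mul 2)).add (h3.const_mul δ)

/-- `ψ'` is strictly antitone on `[r, ∞)` for `r > 0`. -/
lemma psi'_strictAntiOn {δ r : ℝ} (h0 : 0 < δ) (h1 : δ < 1) (hr : 0 < r) :
    StrictAntiOn (ψ' δ) (Set.Ici r) := by
  apply strictAntiOn_of_deriv_neg (convex_Ici r)
  · exact fun x hx => (psi'_hasDerivAt (lt_of_lt_of_le hr hx)).continuousAt.continuousWithinAt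
  · intro x hx
    rw [interior_Ici] at hx
    have hx0 : 0 < x := lt_trans hr hx
    rw [(psi'_hasDerivAt hx0).deriv]
    have hb : 2 * (x + 1) ^ (δ - 2) < x ^ (δ - 2) + (x + 2) ^ (δ - 2) := by
      have := rpow_seconddiff_pos (p := δ - 2) (a := x + 1) (by linarith) (by linarith)
      have e1 : x + 1 - 1 = x := by ring
      have e2 : x + 1 + 1 = x + 2 := by ring
      rwa [e1, e2] at this
    nlinarith [mul_pos h0 (sub_pos.mpr h1)]

lemma psi_seconddiff_neg {δ a : ℝ} (h0 : 0 < δ) (h1 : δ < 1) (ha : 1 < a) :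
    ψ δ (a - 1) + ψ δ (a + 1) < 2 * ψ δ a := by
  have key : 2 * (-ψ δ) a < (-ψ δ) (a - 1) + (-ψ δ) (a + 1) := by
    apply seconddiff_pos (f' := fun x => -ψ' δ x)
    · intro x hx
      have hx0 : 0 < x := by have := hx.1; linarith
      exact (psi_hasDerivAt hx0).neg
    · intro x hx y hy hxy
      have := psi'_strictAntiOn h0 h1 (show (0:ℝ) < a - 1 by linarith)
        (Set.mem_Ici.mpr hx.1) (Set.mem_Ici.mpr hy.1) hxy
      simpa using this
  simp only [Pi.neg_apply] at key
  linarith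

theorem stmt_8 (δ : ℝ) (h0 : 0 < δ) (h1 : δ < 1) (k : ℕ) (hk : 3 ≤ k) :
    q δ k < q δ (k + 1) := by
  have hk3 : (3 : ℝ) ≤ (k : ℝ) := by exact_mod_cast hk
  have hg : ∀ x : ℝ, g δ x = ψ δ (x - 3/2) := by
    intro x
    simp only [g, ψ]
    ring_nf
  have key := psi_seconddiff_neg (a := (k : ℝ) - 3/2) h0 h1 (by linarith)
  have e1 : (k : ℝ) - 3/2 - 1 = (k : ℝ) - 1 - 3/2 := by ring
  have e2 : (k : ℝ) - 3/2 + 1 = (k : ℝ) + 1 - 3/2 := by ring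
  rw [e1, e2] at key
  simp only [q, hg]
  push_cast
  have e3 : (k : ℝ) + 1 - 1 - 3/2 = (k : ℝ) - 3/2 := by ring
  rw [e3]
  linarith
end
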